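/- Let Z = {z ∈ ℝ^{n_z} : Hz ≤ h} be a nonempty polyhedron with h ≥ 0, and let p be a norm of the form p(ζ) = max{λᵀζ : λ ∈ ℝ^{n_z}, ∃μ ∈ ℝ^{n_μ}, Mλ + Nμ ≤ t}, with dual norm p*(ζ) = min{δ ≥ 0 : ∃μ, Mζ + Nμ ≤ δ·t}. Then for every a ∈ ℝ^{n_z} and every k ≥ 0, max_{z ∈ Z} ( aᵀz − k·p(z) ) = min{ βᵀh : β ∈ ℝ^{n_h}, β ≥ 0, p*(a − Hᵀβ) ≤ k }. -/

import Mathlib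

open Matrix Finset

theorem farkas_aux {κ : Type*} [Fintype κ] {ι : Type*} [DecidableEq ι] (s : Finset ι) :
    ∀ (v : ι → κ → ℝ) (b : κ → ℝ),
      (∃ y : ι → ℝ, 0 ≤ y ∧ ∑ i ∈ s, y i • v i = b) ∨
      (∃ z : κ → ℝ, (∀ i ∈ s, v i ⬝ᵥ z ≤ 0) ∧ 0 < b ⬝ᵥ z) := by
  induction s using Finset.induction_on with
  | empty =>
    intro v b
    by_cases hb : b = 0
    · exact Or.inl ⟨0, le_refl _, by simp [hb]⟩
    · refine Or.inr ⟨b, by simp, ?_⟩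
      have h0 : dotProduct b b ≠ 0 := fun hc => hb (dotProduct_self_eq_zero.mp hc)
      have h1 : 0 ≤ dotProduct b b := Finset.sum_nonneg fun i _ => mul_self_nonneg _
      exact lt_of_le_of_ne h1 (Ne.symm h0)
  | @insert a s ha IH =>
    intro v b
    rcases IH v b with ⟨y, hy, hsum⟩ | ⟨z, hz, hbz⟩
    · refine Or.inl ⟨Function.update y a 0, ?_, ?_⟩
      · intro i; by_cases hi : i = a <;> simp [Function.update, hi]; exact hy i
      · rw [Finset.sum_insert ha]
        have : ∑ i ∈ s, (Function.update y a 0) i • v i = ∑ i ∈ s, y i • v i := by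
          apply Finset.sum_congr rfl
          intro i hi
          have : i ≠ a := fun hia => ha (hia ▸ hi)
          simp [Function.update, this]
        simp [this, hsum]
    · by_cases hd : v a ⬝ᵥ z ≤ 0
      · refine Or.inr ⟨z, ?_, hbz⟩
        intro i hi
        rcases Finset.mem_insert.mp hi with rfl | hi
        · exact hd
        · exact hz i hi
      · push_neg at hd
        set d := v a ⬝ᵥ z with hdd
        have hd0 : d ≠ 0 := ne_of_gt hd
        rcases IH (fun i => v i - ((v i ⬝ᵥ z) / d) • v a) (b - ((b ⬝ᵥ z) / d) • v a) with
          ⟨y, hy, hsum⟩ | ⟨w, hw, hbw⟩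
        · -- b ∈ cone
          set S : ℝ := ∑ i ∈ s, y i * (v i ⬝ᵥ z) with hS
          set c : ℝ := (b ⬝ᵥ z - S) / d with hc
          have e1 : ∑ i ∈ s, y i • (v i - ((v i ⬝ᵥ z) / d) • v a)
              = ∑ i ∈ s, y i • v i - (S / d) • v a := by
            simp only [smul_sub, smul_smul]
            rw [Finset.sum_sub_distrib]
            congr 1
            rw [← Finset.sum_smul]
            congr 1
            rw [hS, Finset.sum_div]
            exact Finset.sum_congr rfl fun i _ => (mul_div_assoc _ _ _).symm
          rw [e1] at hsum
          have hc' : c = b ⬝ᵥ z / d - S / d := by rw [hc, sub_div]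
          have hsum' : ∑ i ∈ s, y i • v i + c • v a = b := by
            rw [hc']
            linear_combination (norm := module) hsum
          have hcpos : 0 ≤ c := by
            apply div_nonneg _ (le_of_lt hd)
            have : S ≤ 0 :=
              Finset.sum_nonpos fun i hi => mul_nonpos_of_nonneg_of_nonpos (hy i) (hz i hi)
            linarith
          refine Or.inl ⟨Function.update y a c, ?_, ?_⟩
          · intro i; by_cases hi : i = a <;> simp [Function.update, hi]
            · exact hcpos
            · exact hy i
          · rw [Finset.sum_insert ha]
            have : ∑ i ∈ s, (Function.update y a c) i • v i = ∑ i ∈ s, y i • v i := by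
              apply Finset.sum_congr rfl
              intro i hi
              have : i ≠ a := fun hia => ha (hia ▸ hi)
              simp [Function.update, this]
            rw [this, Function.update_self, add_comm]
            exact hsum'
        · -- separating hyperplane
          refine Or.inr ⟨w - ((v a ⬝ᵥ w) / d) • z, ?_, ?_⟩
          · intro i hi
            rcases Finset.mem_insert.mp hi with rfl | hi
            · have : v i ⬝ᵥ (w - ((v i ⬝ᵥ w) / d) • z) = 0 := by
                rw [dotProduct_sub, dotProduct_smul, smul_eq_mul, ← hdd]
                field_simp
                ring
              exact le_of_eq this
            · have h1 := hw i hi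
              have e2 : v i ⬝ᵥ (w - ((v a ⬝ᵥ w) / d) • z)
                  = (v i - ((v i ⬝ᵥ z) / d) • v a) ⬝ᵥ w
                    + ((v i ⬝ᵥ z) / d * (v a ⬝ᵥ w) - (v a ⬝ᵥ w) / d * (v i ⬝ᵥ z)) := by
                rw [dotProduct_sub, dotProduct_smul, sub_dotProduct,
                  smul_dotProduct, smul_eq_mul, smul_eq_mul]
                ring
              rw [e2]
              have : (v i ⬝ᵥ z) / d * (v a ⬝ᵥ w) - (v a ⬝ᵥ w) / d * (v i ⬝ᵥ z) = 0 := by ring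
              linarith
          · have e3 : b ⬝ᵥ (w - ((v a ⬝ᵥ w) / d) • z)
                = (b - ((b ⬝ᵥ z) / d) • v a) ⬝ᵥ w
                  + ((b ⬝ᵥ z) / d * (v a ⬝ᵥ w) - (v a ⬝ᵥ w) / d * (b ⬝ᵥ z)) := by
              rw [dotProduct_sub, dotProduct_smul, sub_dotProduct,
                smul_dotProduct, smul_eq_mul, smul_eq_mul]
              ring
            rw [e3]
            have : (b ⬝ᵥ z) / d * (v a ⬝ᵥ w) - (v a ⬝ᵥ w) / d * (b ⬝ᵥ z) = 0 := by ring
            linarith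

theorem gale {ι κ : Type*} [Fintype ι] [Fintype κ] [DecidableEq ι] [DecidableEq κ]
    (A : Matrix ι κ ℝ) (b : ι → ℝ) (hinf : ¬ ∃ x : κ → ℝ, A.mulVec x ≤ b) :
    ∃ y : ι → ℝ, 0 ≤ y ∧ Aᵀ.mulVec y = 0 ∧ b ⬝ᵥ y < 0 := by
  classical
  set v : (κ ⊕ κ ⊕ ι) → ι → ℝ := Sum.elim (fun j i => A i j)
    (Sum.elim (fun j i => -A i j) (fun i0 => Pi.single i0 1)) with hv
  rcases farkas_aux (Finset.univ : Finset (κ ⊕ κ ⊕ ι)) v b with ⟨y, hy, hsum⟩ | ⟨z, hz, hbz⟩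
  · exfalso
    apply hinf
    refine ⟨fun j => y (Sum.inl j) - y (Sum.inr (Sum.inl j)), fun i => ?_⟩
    have hbi := congrFun hsum i
    rw [Finset.sum_apply] at hbi
    rw [Fintype.sum_sum_type, Fintype.sum_sum_type] at hbi
    simp only [hv, Sum.elim_inl, Sum.elim_inr, Pi.smul_apply, smul_eq_mul] at hbi
    have hsingle : ∑ i0, y (Sum.inr (Sum.inr i0)) * (Pi.single (M := fun _ => ℝ) i0 1) i
        = y (Sum.inr (Sum.inr i)) := by
      rw [Finset.sum_eq_single i]
      · simp
      · intro j _ hj; simp [Pi.single_apply, hj]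
      · simp
    rw [hsingle] at hbi
    have hAx : A.mulVec (fun j => y (Sum.inl j) - y (Sum.inr (Sum.inl j))) i
        = ∑ j, y (Sum.inl j) * A i j + ∑ j, y (Sum.inr (Sum.inl j)) * -A i j := by
      rw [Matrix.mulVec, dotProduct, ← Finset.sum_add_distrib]
      exact Finset.sum_congr rfl fun j _ => by ring
    rw [hAx]
    have hnn : 0 ≤ y (Sum.inr (Sum.inr i)) := hy _
    linarith [hbi.symm.le, hbi.le]
  · refine ⟨-z, ?_, ?_, ?_⟩
    · intro i
      have := hz (Sum.inr (Sum.inr i)) (Finset.mem_univ _)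
      simp only [hv, Sum.elim_inr] at this
      have hsz : Pi.single i (1:ℝ) ⬝ᵥ z = z i := by
        rw [dotProduct, Finset.sum_eq_single i]
        · simp
        · intro j _ hj; simp [Pi.single_apply, hj]
        · simp
      rw [hsz] at this
      simpa using this
    · funext j
      have h1 := hz (Sum.inl j) (Finset.mem_univ _)
      have h2 := hz (Sum.inr (Sum.inl j)) (Finset.mem_univ _)
      simp only [hv, Sum.elim_inl, Sum.elim_inr] at h1 h2
      have hneg : (fun i => -A i j) ⬝ᵥ z = -((fun i => A i j) ⬝ᵥ z) := by
        simp [dotProduct, neg_mul, Finset.sum_neg_distrib]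
      rw [hneg] at h2
      have he : (fun i => A i j) ⬝ᵥ z = 0 := le_antisymm h1 (by linarith)
      have : Aᵀ.mulVec (-z) j = -((fun i => A i j) ⬝ᵥ z) := by
        rw [Matrix.mulVec, dotProduct, ← neg_dotProduct, dotProduct]
        exact Finset.sum_congr rfl fun i _ => by
          simp only [Matrix.transpose_apply, Pi.neg_apply]; ring
      rw [this, he]
      simp
    · rw [dotProduct_neg]
      simpa using hbz

open Matrix Finset

theorem dot_mono {ι : Type*} [Fintype ι] {u v y : ι → ℝ} (h : u ≤ v) (hy : 0 ≤ y) :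
    u ⬝ᵥ y ≤ v ⬝ᵥ y :=
  Finset.sum_le_sum fun i _ => mul_le_mul_of_nonneg_right (h i) (hy i)

theorem dot_shift {ι κ : Type*} [Fintype ι] [Fintype κ] (M : Matrix ι κ ℝ) (a : κ → ℝ)
    (y : ι → ℝ) : (M *ᵥ a) ⬝ᵥ y = a ⬝ᵥ (Mᵀ *ᵥ y) := by
  rw [dotProduct_comm, Matrix.dotProduct_mulVec, dotProduct_comm,
    Matrix.mulVec_transpose]

theorem ite_dot {ι : Type*} [Fintype ι] [DecidableEq ι] (i : ι) (c : ℝ) (u : ι → ℝ) :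
    (fun j => if j = i then c else 0) ⬝ᵥ u = c * u i := by
  rw [dotProduct, Finset.sum_eq_single i]
  · simp
  · intro j _ hj; simp [hj]
  · simp
open Matrix

set_option maxHeartbeats 2000000 in
/-- **Proposition 7, norm case.**
For the nonempty polyhedron `Z = {z : Hz ≤ h}` (`h ≥ 0`) and a norm penalty
`p(ζ) = max{λᵀζ : ∃ μ, Mλ + Nμ ≤ t}` with dual norm
`p*(ζ) = min{δ ≥ 0 : ∃ μ, Mζ + Nμ ≤ δ·t}`, for any `a` and `k ≥ 0`:
`max_{z ∈ Z} (aᵀz − k·p(z)) = min{βᵀh : β ≥ 0, p*(a − Hᵀβ) ≤ k}`. -/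
theorem innermax_norm_penalty {nz nμ nm nh : ℕ}
    (H : Matrix (Fin nh) (Fin nz) ℝ) (h : Fin nh → ℝ) (hh : 0 ≤ h)
    (hZne : ∃ z : Fin nz → ℝ, H.mulVec z ≤ h)
    (M : Matrix (Fin nm) (Fin nz) ℝ) (N : Matrix (Fin nm) (Fin nμ) ℝ)
    (t : Fin nm → ℝ)
    (p : (Fin nz → ℝ) → ℝ)
    (hp : ∀ ζ, p ζ = sSup {v : ℝ | ∃ lam : Fin nz → ℝ,
        (∃ μ : Fin nμ → ℝ, M.mulVec lam + N.mulVec μ ≤ t) ∧ v = lam ⬝ᵥ ζ})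
    -- `p` is a norm:
    (hp0 : ∀ ζ, p ζ = 0 ↔ ζ = 0)
    (hphom : ∀ (a : ℝ) (ζ), p (a • ζ) = |a| * p ζ)
    (hptri : ∀ ζ ξ, p (ζ + ξ) ≤ p ζ + p ξ)
    (pstar : (Fin nz → ℝ) → ℝ)
    (hpstar : ∀ ζ, pstar ζ =
      sInf {δ : ℝ | 0 ≤ δ ∧ ∃ μ : Fin nμ → ℝ, M.mulVec ζ + N.mulVec μ ≤ δ • t})
    (a : Fin nz → ℝ) (k : ℝ) (hk : 0 ≤ k) :
    sSup {v : ℝ | ∃ z : Fin nz → ℝ, H.mulVec z ≤ h ∧ v = a ⬝ᵥ z - k * p z}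
      = sInf {v : ℝ | ∃ β : Fin nh → ℝ, 0 ≤ β ∧
          pstar (a - Hᵀ.mulVec β) ≤ k ∧ v = β ⬝ᵥ h} := by
  have p0 : p 0 = 0 := (hp0 0).mpr rfl
  have Lpos : ∀ z, 0 ≤ p z := by
    intro z
    have h1 : p (z + (-1 : ℝ) • z) ≤ p z + p ((-1 : ℝ) • z) := hptri _ _
    have h2 : z + (-1 : ℝ) • z = 0 := by module
    rw [h2, p0, hphom] at h1
    simp at h1
    linarith
  -- the degenerate case nz = 0
  rcases Nat.eq_zero_or_pos nz with hnz | hnz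
  · subst hnz
    have hz0 : ∀ z : Fin 0 → ℝ, z = 0 := fun z => funext fun i => absurd i.isLt (Nat.not_lt_zero _)
    have hdot0 : ∀ z w : Fin 0 → ℝ, z ⬝ᵥ w = 0 := fun z w => by
      rw [hz0 z]; exact zero_dotProduct w
    have hS : {v : ℝ | ∃ z : Fin 0 → ℝ, H.mulVec z ≤ h ∧ v = a ⬝ᵥ z - k * p z} = {0} := by
      ext v
      simp only [Set.mem_setOf_eq, Set.mem_singleton_iff]
      constructor
      · rintro ⟨z, _, rfl⟩
        rw [hdot0, hz0 z, p0]; ring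
      · rintro rfl
        refine ⟨0, ?_, ?_⟩
        · rw [Matrix.mulVec_zero]; exact hh
        · rw [hdot0, p0]; ring
    have hps0 : pstar (a - Hᵀ.mulVec (0 : Fin nh → ℝ)) ≤ k := by
      rw [hpstar]
      have hmem : (0:ℝ) ∈ {δ : ℝ | 0 ≤ δ ∧ ∃ μ : Fin nμ → ℝ,
          M.mulVec (a - Hᵀ.mulVec 0) + N.mulVec μ ≤ δ • t} := by
        refine ⟨le_refl _, 0, ?_⟩
        have : M.mulVec (a - Hᵀ.mulVec 0) = 0 := by
          rw [hz0 (a - Hᵀ.mulVec 0), Matrix.mulVec_zero]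
        rw [this, Matrix.mulVec_zero, zero_smul, add_zero]
      calc sInf {δ : ℝ | 0 ≤ δ ∧ ∃ μ : Fin nμ → ℝ,
            M.mulVec (a - Hᵀ.mulVec 0) + N.mulVec μ ≤ δ • t}
          ≤ 0 := csInf_le ⟨0, fun x hx => hx.1⟩ hmem
        _ ≤ k := hk
    have hpsβ : ∀ β : Fin nh → ℝ, pstar (a - Hᵀ.mulVec β) ≤ k := by
      intro β
      have : a - Hᵀ.mulVec β = a - Hᵀ.mulVec 0 := by
        rw [hz0 (a - Hᵀ.mulVec β), hz0 (a - Hᵀ.mulVec 0)]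
      rw [this]; exact hps0
    have hT : {v : ℝ | ∃ β : Fin nh → ℝ, 0 ≤ β ∧
        pstar (a - Hᵀ.mulVec β) ≤ k ∧ v = β ⬝ᵥ h} = {v : ℝ | ∃ β : Fin nh → ℝ, 0 ≤ β ∧ v = β ⬝ᵥ h} := by
      ext v
      simp only [Set.mem_setOf_eq]
      exact ⟨fun ⟨β, h1, _, h3⟩ => ⟨β, h1, h3⟩, fun ⟨β, h1, h3⟩ => ⟨β, h1, hpsβ β, h3⟩⟩
    rw [hS, hT, csSup_singleton]
    have hmem0 : (0:ℝ) ∈ {v : ℝ | ∃ β : Fin nh → ℝ, 0 ≤ β ∧ v = β ⬝ᵥ h} :=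
      ⟨0, le_refl _, (zero_dotProduct h).symm⟩
    have hlb : ∀ v ∈ {v : ℝ | ∃ β : Fin nh → ℝ, 0 ≤ β ∧ v = β ⬝ᵥ h}, (0:ℝ) ≤ v := by
      rintro v ⟨β, hβ, rfl⟩
      exact Finset.sum_nonneg fun i _ => mul_nonneg (hβ i) (hh i)
    exact le_antisymm (le_csInf ⟨0, hmem0⟩ (fun b hb => hlb b hb)) (csInf_le ⟨0, hlb⟩ hmem0)
  -- the main case nz > 0
  have hlam : ∃ lam : Fin nz → ℝ, ∃ μ : Fin nμ → ℝ, M.mulVec lam + N.mulVec μ ≤ t := by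
    by_contra hno
    push_neg at hno
    have hpz : ∀ ζ, p ζ = 0 := by
      intro ζ
      rw [hp ζ]
      have : {v : ℝ | ∃ lam : Fin nz → ℝ,
          (∃ μ : Fin nμ → ℝ, M.mulVec lam + N.mulVec μ ≤ t) ∧ v = lam ⬝ᵥ ζ} = ∅ := by
        ext v
        simp only [Set.mem_setOf_eq, Set.mem_empty_iff_false, iff_false]
        rintro ⟨lam, ⟨μ, hμ⟩, _⟩
        exact hno lam μ hμ
      rw [this, Real.sSup_empty]
    have : (Pi.single (⟨0, hnz⟩ : Fin nz) (1:ℝ)) = 0 := (hp0 _).mp (hpz _)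
    have := congrFun this ⟨0, hnz⟩
    simp at this
  have L1 : ∀ (z lam : Fin nz → ℝ) (μ : Fin nμ → ℝ),
      M.mulVec lam + N.mulVec μ ≤ t → lam ⬝ᵥ z ≤ p z := by
    intro z lam μ hfe
    by_cases hz : z = 0
    · subst hz
      rw [dotProduct_zero, p0]
    · have hB : BddAbove {v : ℝ | ∃ lam : Fin nz → ℝ,
          (∃ μ : Fin nμ → ℝ, M.mulVec lam + N.mulVec μ ≤ t) ∧ v = lam ⬝ᵥ z} := by
        by_contra hB
        have : p z = 0 := by
          rw [hp z, csSup_of_not_bddAbove hB, Real.sSup_empty]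
        exact hz ((hp0 z).mp this)
      rw [hp z]
      exact le_csSup hB ⟨lam, ⟨μ, hfe⟩, rfl⟩
  have Lrec : ∀ (ω z : Fin nz → ℝ) (μ : Fin nμ → ℝ),
      M.mulVec ω + N.mulVec μ ≤ 0 → ω ⬝ᵥ z ≤ 0 := by
    intro ω z μ hrec
    obtain ⟨lam0, μ0, h0⟩ := hlam
    by_contra hpos
    push_neg at hpos
    have key : ∀ s : ℝ, 0 ≤ s → lam0 ⬝ᵥ z + s * (ω ⬝ᵥ z) ≤ p z := by
      intro s hs
      have hfe : M.mulVec (lam0 + s • ω) + N.mulVec (μ0 + s • μ) ≤ t := by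
        intro i
        have h1 := h0 i
        have h2 := hrec i
        simp only [Matrix.mulVec_add, Matrix.mulVec_smul, Pi.add_apply, Pi.smul_apply,
          smul_eq_mul, Pi.zero_apply] at h1 h2 ⊢
        nlinarith [mul_le_mul_of_nonneg_left h2 hs]
      have := L1 z _ _ hfe
      rw [add_dotProduct, smul_dotProduct, smul_eq_mul] at this
      exact this
    have hle0 : lam0 ⬝ᵥ z ≤ p z := by
      have := key 0 le_rfl; simpa using this
    have hs0 : (0:ℝ) ≤ (p z - lam0 ⬝ᵥ z + 1) / (ω ⬝ᵥ z) := div_nonneg (by linarith) (le_of_lt hpos)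
    have := key _ hs0
    rw [div_mul_cancel₀ _ (ne_of_gt hpos)] at this
    linarith
  have LpM : ∀ y : Fin nm → ℝ, 0 ≤ y → Nᵀ.mulVec y = 0 → p (Mᵀ.mulVec y) ≤ t ⬝ᵥ y := by
    intro y hy hN
    rw [hp]
    apply csSup_le
    · obtain ⟨lam0, μ0, h0⟩ := hlam
      exact ⟨_, lam0, ⟨μ0, h0⟩, rfl⟩
    · rintro v ⟨lam, ⟨μ, hfe⟩, rfl⟩
      have e1 : lam ⬝ᵥ (Mᵀ.mulVec y) = (M.mulVec lam) ⬝ᵥ y := (dot_shift M lam y).symm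
      have e2 : (N.mulVec μ) ⬝ᵥ y = 0 := by
        rw [dot_shift N μ y, hN, dotProduct_zero]
      have e3 : (M.mulVec lam + N.mulVec μ) ⬝ᵥ y ≤ t ⬝ᵥ y := dot_mono hfe hy
      rw [add_dotProduct, e2, add_zero] at e3
      rw [e1]
      exact e3
  have FD : ∀ ω : Fin nz → ℝ, ∃ δ : ℝ, 0 ≤ δ ∧ ∃ μ : Fin nμ → ℝ,
      M.mulVec ω + N.mulVec μ ≤ δ • t := by
    intro ω
    by_contra hno
    push_neg at hno
    set A1 : Matrix (Fin nm ⊕ Fin 1) (Fin nμ ⊕ Fin 1) ℝ :=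
      Matrix.fromBlocks N (Matrix.of fun i _ => -t i) 0 (Matrix.of fun _ _ => (-1:ℝ)) with hA1
    set b1 : (Fin nm ⊕ Fin 1) → ℝ := Sum.elim (-(M.mulVec ω)) 0 with hb1
    have hinf : ¬ ∃ x : (Fin nμ ⊕ Fin 1) → ℝ, A1.mulVec x ≤ b1 := by
      rintro ⟨x, hx⟩
      rw [hA1, Matrix.fromBlocks_mulVec] at hx
      have hδ : 0 ≤ x (Sum.inr 0) := by
        have h0 := hx (Sum.inr 0)
        simp only [hb1, Sum.elim_inr, Pi.add_apply, Matrix.mulVec, dotProduct,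
          Fin.sum_univ_one, Matrix.zero_apply, Matrix.of_apply, Function.comp_apply,
          zero_mul, Finset.sum_const_zero, Pi.zero_apply, neg_mul, one_mul, zero_add] at h0
        linarith
      refine hno (x (Sum.inr 0)) hδ (x ∘ Sum.inl) ?_
      intro i
      have := hx (Sum.inl i)
      simp only [Sum.elim_inl, Pi.add_apply, hb1] at this
      simp only [Matrix.mulVec, dotProduct, Fin.sum_univ_one, Matrix.of_apply,
        Function.comp_apply, Pi.neg_apply, neg_mul] at this
      simp only [Pi.add_apply, Pi.smul_apply, smul_eq_mul, Matrix.mulVec, dotProduct,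
        Function.comp_apply]
      linarith
    obtain ⟨y2, hy2, hAt, hbv⟩ := gale A1 b1 hinf
    have hy2e : y2 = Sum.elim (y2 ∘ Sum.inl) (fun _ => y2 (Sum.inr 0)) := by
      funext u; cases u with
      | inl i => rfl
      | inr i => rw [Sum.elim_inr, Fin.fin_one_eq_zero i]
    have hNt : Nᵀ.mulVec (y2 ∘ Sum.inl) = 0 := by
      funext j
      have := congrFun hAt (Sum.inl j)
      rw [hA1, Matrix.fromBlocks_transpose, Matrix.fromBlocks_mulVec] at this
      simp only [Sum.elim_inl, Pi.add_apply, Pi.zero_apply, Matrix.mulVec, dotProduct,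
        Matrix.transpose_apply, Matrix.zero_apply, zero_mul, Finset.sum_const_zero,
        Function.comp_apply, add_zero] at this
      simp only [Matrix.mulVec, dotProduct, Matrix.transpose_apply, Function.comp_apply,
        Pi.zero_apply]
      exact this
    have hts : t ⬝ᵥ (y2 ∘ Sum.inl) ≤ 0 := by
      have := congrFun hAt (Sum.inr 0)
      rw [hA1, Matrix.fromBlocks_transpose, Matrix.fromBlocks_mulVec] at this
      simp only [Sum.elim_inr, Pi.add_apply, Pi.zero_apply] at this
      simp only [Matrix.mulVec, dotProduct, Matrix.transpose_apply, Matrix.of_apply,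
        Function.comp_apply, Fin.sum_univ_one, neg_mul, one_mul] at this
      have hs0 : 0 ≤ y2 (Sum.inr 0) := hy2 (Sum.inr 0)
      simp only [dotProduct, Function.comp_apply]
      have e3 : ∑ i, t i * y2 (Sum.inl i) = ∑ i, y2 (Sum.inl i) * t i :=
        Finset.sum_congr rfl fun i _ => mul_comm _ _
      have e4 : ∑ i, -(t i * y2 (Sum.inl i)) = -∑ i, t i * y2 (Sum.inl i) := by
        rw [← Finset.sum_neg_distrib]
      nlinarith [this, hs0, e3, e4]
    have hMy : 0 < (M.mulVec ω) ⬝ᵥ (y2 ∘ Sum.inl) := by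
      rw [hy2e, hb1] at hbv
      rw [sumElim_dotProduct_sumElim] at hbv
      have e0 : (0 : Fin 1 → ℝ) ⬝ᵥ (fun _ => y2 (Sum.inr 0)) = 0 := zero_dotProduct _
      rw [e0, add_zero, neg_dotProduct] at hbv
      linarith
    have hyn : 0 ≤ (y2 ∘ Sum.inl) := fun i => hy2 (Sum.inl i)
    have hpw : p (Mᵀ.mulVec (y2 ∘ Sum.inl)) ≤ t ⬝ᵥ (y2 ∘ Sum.inl) := LpM _ hyn hNt
    have hw0 : Mᵀ.mulVec (y2 ∘ Sum.inl) = 0 :=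
      (hp0 _).mp (le_antisymm (le_trans hpw hts) (Lpos _))
    have : (M.mulVec ω) ⬝ᵥ (y2 ∘ Sum.inl) = 0 := by
      rw [dot_shift M ω _, hw0, dotProduct_zero]
    linarith
  have Ldual : ∀ (ω z : Fin nz → ℝ), pstar ω ≤ k → ω ⬝ᵥ z ≤ k * p z := by
    intro ω z hpk
    by_cases hpz : p z = 0
    · have hz := (hp0 z).mp hpz
      subst hz
      rw [dotProduct_zero, hpz, mul_zero]
    · have hpzpos : 0 < p z := lt_of_le_of_ne (Lpos z) (Ne.symm hpz)
      obtain ⟨δ0, hδ0⟩ := FD ω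
      have hlow : ∀ δ ∈ {δ : ℝ | 0 ≤ δ ∧ ∃ μ : Fin nμ → ℝ,
          M.mulVec ω + N.mulVec μ ≤ δ • t}, ω ⬝ᵥ z ≤ δ * p z := by
        rintro δ ⟨hδ, μ, hfe⟩
        rcases eq_or_lt_of_le hδ with hδe | hδp
        · rw [← hδe, zero_mul]
          refine Lrec ω z μ ?_
          rw [← hδe, zero_smul] at hfe
          exact hfe
        · have hfe' : M.mulVec (δ⁻¹ • ω) + N.mulVec (δ⁻¹ • μ) ≤ t := by
            intro i
            have h1 := hfe i
            simp only [Matrix.mulVec_smul, Pi.add_apply, Pi.smul_apply, smul_eq_mul] at h1 ⊢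
            rw [← mul_add]
            calc δ⁻¹ * (M.mulVec ω i + N.mulVec μ i) ≤ δ⁻¹ * (δ * t i) := by
                  apply mul_le_mul_of_nonneg_left _ (inv_nonneg.mpr hδ)
                  exact h1
              _ = t i := by field_simp
          have := L1 z _ _ hfe'
          rw [smul_dotProduct, smul_eq_mul] at this
          calc ω ⬝ᵥ z = δ * (δ⁻¹ * (ω ⬝ᵥ z)) := by field_simp
            _ ≤ δ * p z := mul_le_mul_of_nonneg_left this (le_of_lt hδp)
      have hdiv : ω ⬝ᵥ z / p z ≤ pstar ω := by
        rw [hpstar]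
        refine le_csInf ⟨δ0, hδ0⟩ ?_
        intro δ hδ
        rw [div_le_iff₀ hpzpos]
        exact hlow δ hδ
      have := le_trans hdiv hpk
      rw [div_le_iff₀ hpzpos] at this
      exact this
  have WD : ∀ (z : Fin nz → ℝ) (β : Fin nh → ℝ), H.mulVec z ≤ h → 0 ≤ β →
      pstar (a - Hᵀ.mulVec β) ≤ k → a ⬝ᵥ z - k * p z ≤ β ⬝ᵥ h := by
    intro z β hz hβ hps
    have h1 : (a - Hᵀ.mulVec β) ⬝ᵥ z ≤ k * p z := Ldual _ z hps
    have h2 : (Hᵀ.mulVec β) ⬝ᵥ z = β ⬝ᵥ (H.mulVec z) := by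
      rw [dot_shift Hᵀ β z, Matrix.transpose_transpose]
    have h3 : β ⬝ᵥ (H.mulVec z) ≤ β ⬝ᵥ h := by
      rw [dotProduct_comm β, dotProduct_comm β h]
      exact dot_mono hz hβ
    have h4 : a ⬝ᵥ z = (a - Hᵀ.mulVec β) ⬝ᵥ z + (Hᵀ.mulVec β) ⬝ᵥ z := by
      rw [sub_dotProduct]; ring
    linarith
  set S := {v : ℝ | ∃ z : Fin nz → ℝ, H.mulVec z ≤ h ∧ v = a ⬝ᵥ z - k * p z} with hSdef
  set T := {v : ℝ | ∃ β : Fin nh → ℝ, 0 ≤ β ∧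
      pstar (a - Hᵀ.mulVec β) ≤ k ∧ v = β ⬝ᵥ h} with hTdef
  obtain ⟨z0, hz0⟩ := hZne
  have hSne : S.Nonempty := ⟨a ⬝ᵥ z0 - k * p z0, z0, hz0, rfl⟩
  by_cases hbdd : BddAbove S
  · set vstar := sSup S with hvstar
    have SD : ∃ β : Fin nh → ℝ, 0 ≤ β ∧
        (∃ μ : Fin nμ → ℝ, M.mulVec (a - Hᵀ.mulVec β) + N.mulVec μ ≤ k • t) ∧
        h ⬝ᵥ β ≤ vstar := by
      by_contra hno
      push_neg at hno
      set C : Matrix (Fin nm ⊕ Fin 1) (Fin nh) ℝ :=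
        Matrix.of (Sum.elim (fun r j => -(M * Hᵀ) r j) (fun _ j => h j)) with hC
      set D : Matrix (Fin nm ⊕ Fin 1) (Fin nμ) ℝ :=
        Matrix.of (Sum.elim (fun r j => N r j) (fun _ _ => (0:ℝ))) with hD
      set A2 : Matrix (Fin nh ⊕ (Fin nm ⊕ Fin 1)) (Fin nh ⊕ Fin nμ) ℝ :=
        Matrix.fromBlocks (-1) 0 C D with hA2
      set b2 : (Fin nh ⊕ (Fin nm ⊕ Fin 1)) → ℝ :=
        Sum.elim 0 (Sum.elim (k • t - M.mulVec a) (fun _ => vstar)) with hb2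
      have hinf : ¬ ∃ x : (Fin nh ⊕ Fin nμ) → ℝ, A2.mulVec x ≤ b2 := by
        rintro ⟨x, hx⟩
        rw [hA2, Matrix.fromBlocks_mulVec] at hx
        have hβ : 0 ≤ x ∘ Sum.inl := by
          intro i
          have := hx (Sum.inl i)
          simp only [hb2, Sum.elim_inl, Pi.add_apply, Matrix.neg_mulVec, Matrix.one_mulVec,
            Pi.neg_apply, Matrix.zero_mulVec, Pi.zero_apply, add_zero,
            Function.comp_apply] at this
          simp only [Function.comp_apply, Pi.zero_apply]
          linarith
        have hfe : M.mulVec (a - Hᵀ.mulVec (x ∘ Sum.inl)) + N.mulVec (x ∘ Sum.inr) ≤ k • t := by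
          intro r
          have := hx (Sum.inr (Sum.inl r))
          simp only [hb2, Sum.elim_inr, Sum.elim_inl, Pi.add_apply, hC, hD, Matrix.mulVec,
            dotProduct, Matrix.of_apply, Function.comp_apply, Pi.sub_apply,
            Pi.smul_apply, smul_eq_mul, neg_mul] at this
          have hMH : (M * Hᵀ).mulVec (x ∘ Sum.inl) = M.mulVec (Hᵀ.mulVec (x ∘ Sum.inl)) :=
            (Matrix.mulVec_mulVec _ _ _).symm
          have e1 : M.mulVec (a - Hᵀ.mulVec (x ∘ Sum.inl)) r
              = M.mulVec a r - (M * Hᵀ).mulVec (x ∘ Sum.inl) r := by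
            rw [Matrix.mulVec_sub, hMH]; rfl
          simp only [Pi.add_apply, Pi.smul_apply, smul_eq_mul, e1]
          simp only [Matrix.mulVec, dotProduct, Function.comp_apply] at this ⊢
          rw [Finset.sum_neg_distrib] at this
          linarith
        have hhb : h ⬝ᵥ (x ∘ Sum.inl) ≤ vstar := by
          have := hx (Sum.inr (Sum.inr 0))
          simp only [hb2, Sum.elim_inr, Pi.add_apply, hC, hD, Matrix.mulVec, dotProduct,
            Matrix.of_apply, Function.comp_apply, zero_mul, Finset.sum_const_zero,
            add_zero] at this
          simp only [dotProduct, Function.comp_apply]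
          linarith
        exact absurd hhb (not_le.mpr (hno (x ∘ Sum.inl) hβ ⟨x ∘ Sum.inr, hfe⟩))
      obtain ⟨y2, hy2, hAt, hbv⟩ := gale A2 b2 hinf
      set u : Fin nh → ℝ := fun j => y2 (Sum.inl j) with hu
      set yv : Fin nm → ℝ := fun r => y2 (Sum.inr (Sum.inl r)) with hyv
      set γ : ℝ := y2 (Sum.inr (Sum.inr 0)) with hγ
      have hy2e : y2 = Sum.elim u (Sum.elim yv (fun _ => γ)) := by
        funext q
        rcases q with j | r
        · rfl
        · rcases r with r | i
          · rfl
          · simp only [Sum.elim_inr, hγ, Fin.fin_one_eq_zero i]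
      have hun : ∀ j, (0:ℝ) ≤ u j := fun j => hy2 (Sum.inl j)
      have hyvn : 0 ≤ yv := fun r => hy2 (Sum.inr (Sum.inl r))
      have hγn : (0:ℝ) ≤ γ := hy2 (Sum.inr (Sum.inr 0))
      -- transpose equations
      have hcolh : ∀ j, (H * Mᵀ).mulVec yv j = γ * h j - u j := by
        intro j
        have := congrFun hAt (Sum.inl j)
        rw [hA2, Matrix.fromBlocks_transpose, Matrix.fromBlocks_mulVec, hy2e] at this
        simp only [Sum.elim_inl, Pi.add_apply, Pi.zero_apply, Matrix.transpose_neg,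
          Matrix.transpose_one, Matrix.neg_mulVec, Matrix.one_mulVec, Pi.neg_apply] at this
        have e2 : Cᵀ.mulVec ((Sum.elim u (Sum.elim yv (fun _ : Fin 1 => γ))) ∘ Sum.inr) j
            = (∑ r, -(M * Hᵀ) r j * yv r) + h j * γ := by
          simp only [Matrix.mulVec, dotProduct, Matrix.transpose_apply, hC,
            Matrix.of_apply, Function.comp_apply, Fintype.sum_sum_type, Sum.elim_inr,
            Sum.elim_inl, Fin.sum_univ_one]
        have e3 : (Sum.elim u (Sum.elim yv (fun _ : Fin 1 => γ))) ∘ Sum.inl = u := by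
          funext i; rfl
        rw [e3, e2] at this
        have e4 : (H * Mᵀ).mulVec yv j = ∑ r, (M * Hᵀ) r j * yv r := by
          rw [show H * Mᵀ = (M * Hᵀ)ᵀ by rw [Matrix.transpose_mul, Matrix.transpose_transpose]]
          simp only [Matrix.mulVec, dotProduct, Matrix.transpose_apply]
        rw [e4]
        simp only [neg_mul] at this
        rw [Finset.sum_neg_distrib] at this
        linarith
      have hNt2 : Nᵀ.mulVec yv = 0 := by
        funext j
        have := congrFun hAt (Sum.inr j)
        rw [hA2, Matrix.fromBlocks_transpose, Matrix.fromBlocks_mulVec, hy2e] at this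
        simp only [Sum.elim_inr, Pi.add_apply, Pi.zero_apply, Matrix.transpose_zero,
          Matrix.zero_mulVec] at this
        have e2 : Dᵀ.mulVec ((Sum.elim u (Sum.elim yv (fun _ : Fin 1 => γ))) ∘ Sum.inr) j
            = ∑ r, N r j * yv r := by
          simp only [Matrix.mulVec, dotProduct, Matrix.transpose_apply, hD,
            Matrix.of_apply, Function.comp_apply, Fintype.sum_sum_type, Sum.elim_inr,
            Sum.elim_inl, Fin.sum_univ_one, zero_mul, Finset.sum_const_zero, add_zero]
        rw [e2] at this
        simp only [Matrix.mulVec, dotProduct, Matrix.transpose_apply, Pi.zero_apply]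
        linarith
      have hval : (k • t - M.mulVec a) ⬝ᵥ yv + vstar * γ < 0 := by
        rw [hy2e, hb2] at hbv
        rw [sumElim_dotProduct_sumElim, sumElim_dotProduct_sumElim] at hbv
        have e0 : (0 : Fin nh → ℝ) ⬝ᵥ u = 0 := zero_dotProduct _
        have e1 : (fun _ : Fin 1 => vstar) ⬝ᵥ (fun _ => γ) = vstar * γ := by
          rw [dotProduct, Fin.sum_univ_one]
        rw [e0, e1, zero_add] at hbv
        exact hbv
      set w : Fin nz → ℝ := Mᵀ.mulVec yv with hw
      have hpw : p w ≤ t ⬝ᵥ yv := LpM yv hyvn hNt2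
      have hval' : k * (t ⬝ᵥ yv) - a ⬝ᵥ w + γ * vstar < 0 := by
        have e1 : (k • t - M.mulVec a) ⬝ᵥ yv = k * (t ⬝ᵥ yv) - (M.mulVec a) ⬝ᵥ yv := by
          rw [sub_dotProduct, smul_dotProduct, smul_eq_mul]
        have e2 : (M.mulVec a) ⬝ᵥ yv = a ⬝ᵥ w := dot_shift M a yv
        rw [e1, e2] at hval
        linarith
      have hHw : H.mulVec w = (H * Mᵀ).mulVec yv := by rw [hw, Matrix.mulVec_mulVec]
      rcases eq_or_lt_of_le hγn with hγ0 | hγpos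
      · -- γ = 0 : primal unbounded
        have hHw0 : H.mulVec w ≤ 0 := by
          intro j
          rw [hHw]
          rw [hcolh j, ← hγ0]
          simp only [Pi.zero_apply]
          have := hun j
          linarith
        have haw : k * p w < a ⬝ᵥ w := by
          have h1 : k * p w ≤ k * (t ⬝ᵥ yv) := mul_le_mul_of_nonneg_left hpw hk
          rw [← hγ0] at hval'
          simp only [zero_mul] at hval'
          linarith
        obtain ⟨c, hc⟩ := hbdd
        set base : ℝ := a ⬝ᵥ z0 - k * p z0 with hbase
        set ε : ℝ := a ⬝ᵥ w - k * p w with hε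
        have hεpos : 0 < ε := by rw [hε]; linarith
        set s : ℝ := max 0 ((c - base + 1) / ε) with hsdef
        have hs0 : 0 ≤ s := le_max_left _ _
        have hfz : H.mulVec (z0 + s • w) ≤ h := by
          intro i
          have h1 := hz0 i
          have h2 := hHw0 i
          simp only [Matrix.mulVec_add, Matrix.mulVec_smul, Pi.add_apply, Pi.smul_apply,
            smul_eq_mul, Pi.zero_apply] at h1 h2 ⊢
          nlinarith [mul_le_mul_of_nonneg_left h2 hs0]
        have hpzw : p (z0 + s • w) ≤ p z0 + s * p w := by
          calc p (z0 + s • w) ≤ p z0 + p (s • w) := hptri _ _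
            _ = p z0 + s * p w := by rw [hphom, abs_of_nonneg hs0]
        have hmem : a ⬝ᵥ (z0 + s • w) - k * p (z0 + s • w) ∈ S := ⟨z0 + s • w, hfz, rfl⟩
        have hle := hc hmem
        have hda : a ⬝ᵥ (z0 + s • w) = a ⬝ᵥ z0 + s * (a ⬝ᵥ w) := by
          rw [dotProduct_add, dotProduct_smul, smul_eq_mul]
        have hval2 : base + s * ε ≤ a ⬝ᵥ (z0 + s • w) - k * p (z0 + s • w) := by
          have h3 : k * p (z0 + s • w) ≤ k * (p z0 + s * p w) :=
            mul_le_mul_of_nonneg_left hpzw hk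
          have e5 : a ⬝ᵥ z0 + s * (a ⬝ᵥ w) - k * (p z0 + s * p w)
              ≤ a ⬝ᵥ (z0 + s • w) - k * p (z0 + s • w) := by
            rw [hda]; linarith
          have e6 : a ⬝ᵥ z0 + s * (a ⬝ᵥ w) - k * (p z0 + s * p w) = base + s * ε := by
            rw [hbase, hε]; ring
          linarith
        have hsε : c - base + 1 ≤ s * ε := by
          have hs1 : (c - base + 1) / ε ≤ s := le_max_right _ _
          calc c - base + 1 = ((c - base + 1) / ε) * ε := by field_simp
            _ ≤ s * ε := mul_le_mul_of_nonneg_right hs1 (le_of_lt hεpos)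
        linarith
      · -- γ > 0 : better primal point
        set zb : Fin nz → ℝ := γ⁻¹ • w with hzb
        have hfz : H.mulVec zb ≤ h := by
          intro j
          rw [hzb]
          simp only [Matrix.mulVec_smul, Pi.smul_apply, smul_eq_mul]
          rw [hHw, hcolh j]
          have h1 := hun j
          have h2 : γ⁻¹ * (γ * h j - u j) = h j - γ⁻¹ * u j := by
            field_simp
          rw [h2]
          have : 0 ≤ γ⁻¹ * u j := mul_nonneg (inv_nonneg.mpr hγn) h1
          linarith
        have hpzb : p zb = γ⁻¹ * p w := by
          rw [hzb, hphom, abs_of_nonneg (inv_nonneg.mpr hγn)]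
        have hmem : a ⬝ᵥ zb - k * p zb ∈ S := ⟨zb, hfz, rfl⟩
        have hle : a ⬝ᵥ zb - k * p zb ≤ vstar := le_csSup hbdd hmem
        have hda : a ⬝ᵥ zb = γ⁻¹ * (a ⬝ᵥ w) := by
          rw [hzb, dotProduct_smul, smul_eq_mul]
        have hγinv : 0 < γ⁻¹ := inv_pos.mpr hγpos
        have hgt : vstar < a ⬝ᵥ zb - k * p zb := by
          rw [hda, hpzb]
          have h1 : a ⬝ᵥ w - k * (t ⬝ᵥ yv) > γ * vstar := by linarith
          have h2 : k * p w ≤ k * (t ⬝ᵥ yv) := mul_le_mul_of_nonneg_left hpw hk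
          have h3 : γ * vstar < a ⬝ᵥ w - k * p w := by linarith
          have h4 := mul_lt_mul_of_pos_left h3 hγinv
          calc vstar = γ⁻¹ * (γ * vstar) := by field_simp
            _ < γ⁻¹ * (a ⬝ᵥ w - k * p w) := h4
            _ = γ⁻¹ * (a ⬝ᵥ w) - k * (γ⁻¹ * p w) := by ring
        linarith
    obtain ⟨β, hβ, ⟨μ, hfeas⟩, hvle⟩ := SD
    have hpsβ : pstar (a - Hᵀ.mulVec β) ≤ k := by
      rw [hpstar]
      exact csInf_le ⟨0, fun x hx => hx.1⟩ ⟨hk, μ, hfeas⟩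
    have hTmem : β ⬝ᵥ h ∈ T := ⟨β, hβ, hpsβ, rfl⟩
    have hβv : β ⬝ᵥ h ≤ vstar := by rwa [dotProduct_comm] at hvle
    apply le_antisymm
    · refine le_csInf ⟨β ⬝ᵥ h, hTmem⟩ ?_
      rintro d ⟨β', hβ', hps', rfl⟩
      refine csSup_le hSne ?_
      rintro s ⟨z, hz, rfl⟩
      exact WD z β' hz hβ' hps'
    · have h1 : sInf T ≤ β ⬝ᵥ h := by
        refine csInf_le ⟨a ⬝ᵥ z0 - k * p z0, ?_⟩ hTmem
        rintro d ⟨β', hβ', hps', rfl⟩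
        exact WD z0 β' hz0 hβ' hps'
      exact le_trans h1 hβv
  · have hT : T = ∅ := by
      rw [Set.eq_empty_iff_forall_notMem]
      rintro d ⟨β', hβ', hps', rfl⟩
      exact hbdd ⟨β' ⬝ᵥ h, by rintro s ⟨z, hz, rfl⟩; exact WD z β' hz hβ' hps'⟩
    rw [csSup_of_not_bddAbove hbdd, hT, Real.sSup_empty, Real.sInf_empty]
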